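/- Let W_1, …, W_n be nonempty closed convex subsets of ℝ^d and λ_1, …, λ_n > 0 with ∑ λ_i = 1. If η ∈ ri(conv(W_1 ∪ ⋯ ∪ W_n)), then there exist points ξ_i ∈ ri W_i and weights δ_i > 0 with ∑ δ_i = 1, such that η = ∑ δ_i ξ_i, provided the sets W_i are bounded. -/

import Mathlib

open Finset

noncomputable section

abbrev E (d : ℕ) : Type := EuclideanSpace ℝ (Fin d)

section Aux

variable {F : Type*} [NormedAddCommGroup F] [NormedSpace ℝ F]

lemma mem_ri_iff {s : Set F} {x : F} :
    x ∈ intrinsicInterior ℝ s ↔ x ∈ affineSpan ℝ s ∧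
      ∃ ε > (0:ℝ), ∀ y ∈ affineSpan ℝ s, dist y x < ε → y ∈ s := by
  rw [intrinsicInterior]
  constructor
  · rintro ⟨u, hu, rfl⟩
    refine ⟨u.2, ?_⟩
    rw [mem_interior_iff_mem_nhds, Metric.mem_nhds_iff] at hu
    obtain ⟨ε, hε, hball⟩ := hu
    exact ⟨ε, hε, fun y hy hdist => hball (by simpa [Metric.mem_ball, Subtype.dist_eq] using hdist : (⟨y, hy⟩ : affineSpan ℝ s) ∈ Metric.ball u ε)⟩
  · rintro ⟨hx, ε, hε, h⟩
    refine ⟨⟨x, hx⟩, ?_, rfl⟩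
    rw [mem_interior_iff_mem_nhds, Metric.mem_nhds_iff]
    exact ⟨ε, hε, fun y hy => h y y.2 (by simpa [Metric.mem_ball, Subtype.dist_eq] using hy)⟩

lemma mem_span_combo {s : Set F} {x y : F} {a b : ℝ} (hx : x ∈ affineSpan ℝ s)
    (hy : y ∈ affineSpan ℝ s) (hab : a + b = 1) : a • x + b • y ∈ affineSpan ℝ s := by
  have h := AffineSubspace.smul_vsub_vadd_mem (affineSpan ℝ s) a hx hy hy
  have : a • x + b • y = a • (x -ᵥ y) +ᵥ y := by
    have hb : b = 1 - a := by linarith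
    simp [vsub_eq_sub, vadd_eq_add, smul_sub, hb, sub_smul, one_smul]
    abel
  rwa [this]

/-- Combination of a point of `s` and a point of the relative interior, with positive
weight on the latter, lies in the relative interior. -/
lemma combo_mem_ri {s : Set F} (hs : Convex ℝ s) {x y : F} {a b : ℝ}
    (hx : x ∈ intrinsicInterior ℝ s) (hy : y ∈ s) (ha : 0 ≤ a) (hb : 0 < b)
    (hab : a + b = 1) : a • y + b • x ∈ intrinsicInterior ℝ s := by
  rw [mem_ri_iff] at hx ⊢
  obtain ⟨hxspan, ε, hε, h⟩ := hx
  have hyspan : y ∈ affineSpan ℝ s := subset_affineSpan ℝ s hy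
  refine ⟨mem_span_combo hyspan hxspan hab, b * ε, by positivity, fun w hw hdist => ?_⟩
  set u : F := x + b⁻¹ • (w - (a • y + b • x)) with hu
  have huspan : u ∈ affineSpan ℝ s := by
    have := AffineSubspace.smul_vsub_vadd_mem (affineSpan ℝ s) b⁻¹ hw
      (mem_span_combo hyspan hxspan hab) hxspan
    simpa [vsub_eq_sub, vadd_eq_add, hu, add_comm] using this
  have hus : u ∈ s := by
    apply h u huspan
    have : dist u x = b⁻¹ * dist w (a • y + b • x) := by
      rw [hu, dist_eq_norm, add_sub_cancel_left, norm_smul, Real.norm_eq_abs,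
        abs_of_pos (inv_pos.2 hb), dist_eq_norm]
    rw [this]
    calc b⁻¹ * dist w (a • y + b • x) < b⁻¹ * (b * ε) := by
          apply mul_lt_mul_of_pos_left hdist (inv_pos.2 hb)
      _ = ε := by field_simp
  have hw' : w = a • y + b • u := by
    rw [hu, smul_add, smul_smul, mul_inv_cancel₀ hb.ne', one_smul]
    abel
  rw [hw']
  exact hs hy hus ha hb.le hab

/-- Extension property: from a relative interior point one can move slightly
beyond, away from any point of the set. -/
lemma ri_extension {s : Set F} {x z : F} (hx : x ∈ intrinsicInterior ℝ s) (hz : z ∈ s) :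
    ∃ t > (0:ℝ), x + t • (x - z) ∈ s := by
  rw [mem_ri_iff] at hx
  obtain ⟨hxspan, ε, hε, h⟩ := hx
  have hzspan : z ∈ affineSpan ℝ s := subset_affineSpan ℝ s hz
  obtain ⟨t, ht, htε⟩ : ∃ t > (0:ℝ), t * ‖x - z‖ < ε := by
    rcases eq_or_ne (‖x - z‖) 0 with h0 | h0
    · exact ⟨1, one_pos, by simp [h0, hε]⟩
    · have hpos : 0 < ‖x - z‖ := lt_of_le_of_ne (norm_nonneg _) (Ne.symm h0)
      refine ⟨ε / (2 * ‖x - z‖), by positivity, ?_⟩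
      rw [div_mul_eq_mul_div, mul_comm]
      rw [div_lt_iff₀ (by positivity)]
      nlinarith
  refine ⟨t, ht, h _ ?_ ?_⟩
  · have := AffineSubspace.smul_vsub_vadd_mem (affineSpan ℝ s) t hxspan hzspan hxspan
    simpa [vsub_eq_sub, vadd_eq_add, add_comm] using this
  · have : dist (x + t • (x - z)) x = t * ‖x - z‖ := by
      simp [dist_eq_norm, norm_smul, abs_of_pos ht]
    rw [this]; exact htε

lemma hull_rep {n : ℕ} (W : Fin n → Set F) (hWne : ∀ i, (W i).Nonempty)
    (hWconv : ∀ i, Convex ℝ (W i)) {x : F} (hx : x ∈ convexHull ℝ (⋃ i, W i)) :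
    ∃ (α : Fin n → ℝ) (w : Fin n → F), (∀ i, 0 ≤ α i) ∧ ∑ i, α i = 1 ∧
      (∀ i, w i ∈ W i) ∧ x = ∑ i, α i • w i := by
  set S : Set F := {x | ∃ (α : Fin n → ℝ) (w : Fin n → F), (∀ i, 0 ≤ α i) ∧ ∑ i, α i = 1 ∧
      (∀ i, w i ∈ W i) ∧ x = ∑ i, α i • w i} with hS
  suffices h : convexHull ℝ (⋃ i, W i) ⊆ S from h hx
  apply convexHull_min
  · rintro p hp
    obtain ⟨_, ⟨j, rfl⟩, hpj⟩ := hp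
    refine ⟨fun i => if i = j then 1 else 0,
      Function.update (fun i => (hWne i).some) j p,
      fun i => by by_cases h : i = j <;> simp [h], ?_, ?_, ?_⟩
    · simp
    · intro i
      rcases eq_or_ne i j with rfl | hij
      · simpa using hpj
      · simpa [Function.update_of_ne hij] using (hWne i).some_mem
    · rw [Finset.sum_eq_single j]
      · simp
      · intro b _ hb; simp [hb]
      · simp
  · rintro x ⟨α, w, hα, hα1, hw, rfl⟩ y ⟨β, v, hβ, hβ1, hv, rfl⟩ a b ha hb hab
    set γ : Fin n → ℝ := fun i => a * α i + b * β i with hγ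
    have hγ0 : ∀ i, 0 ≤ γ i := fun i => add_nonneg (mul_nonneg ha (hα i)) (mul_nonneg hb (hβ i))
    set u : Fin n → F := fun i =>
      if h : γ i = 0 then (hWne i).some
      else ((a * α i) / γ i) • w i + ((b * β i) / γ i) • v i with hudef
    refine ⟨γ, u, hγ0, ?_, ?_, ?_⟩
    · simp only [hγ, Finset.sum_add_distrib, ← Finset.mul_sum, hα1, hβ1]
      simpa using hab
    · intro i
      by_cases h : γ i = 0
      · simpa [hudef, h] using (hWne i).some_mem
      · have hγpos : 0 < γ i := lt_of_le_of_ne (hγ0 i) (Ne.symm h)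
        have : u i = ((a * α i) / γ i) • w i + ((b * β i) / γ i) • v i := by
          simp [hudef, h]
        rw [this]
        exact hWconv i (hw i) (hv i) (div_nonneg (mul_nonneg ha (hα i)) (hγ0 i))
          (div_nonneg (mul_nonneg hb (hβ i)) (hγ0 i)) (by field_simp; rfl)
    · have key : ∀ i, γ i • u i = (a * α i) • w i + (b * β i) • v i := by
        intro i
        by_cases h : γ i = 0
        · have h' : a * α i + b * β i = 0 := h
          have h1 : a * α i = 0 := by
            nlinarith [mul_nonneg ha (hα i), mul_nonneg hb (hβ i)]
          have h2 : b * β i = 0 := by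
            nlinarith [mul_nonneg ha (hα i), mul_nonneg hb (hβ i)]
          simp [h, h1, h2]
        · have : u i = ((a * α i) / γ i) • w i + ((b * β i) / γ i) • v i := by
            simp [hudef, h]
          rw [this, smul_add, smul_smul, smul_smul, mul_div_cancel₀ _ h, mul_div_cancel₀ _ h]
      simp only [key, Finset.sum_add_distrib, Finset.smul_sum, smul_smul]

open Finset in
theorem selection_lemma' {d n : ℕ} (hn : 0 < n)
    (W : Fin n → Set (EuclideanSpace ℝ (Fin d)))
    (hWne : ∀ i, (W i).Nonempty)
    (hWconv : ∀ i, Convex ℝ (W i))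
    (lam : Fin n → ℝ) (hlam : ∀ i, 0 < lam i) (hlam1 : ∑ i, lam i = 1)
    (η : EuclideanSpace ℝ (Fin d))
    (hη : η ∈ intrinsicInterior ℝ (convexHull ℝ (⋃ i, W i))) :
    ∃ (ξ : Fin n → EuclideanSpace ℝ (Fin d)) (δ : Fin n → ℝ),
      (∀ i, ξ i ∈ intrinsicInterior ℝ (W i)) ∧ (∀ i, 0 < δ i) ∧
      (∑ i, δ i = 1) ∧ η = ∑ i, δ i • ξ i := by
  classical
  set C := convexHull ℝ (⋃ i, W i) with hC
  have hCconv : Convex ℝ C := convex_convexHull ℝ _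
  choose ξ₀ hξ₀ using fun i => Set.Nonempty.intrinsicInterior (hWconv i) (hWne i)
  have hξ₀W : ∀ i, ξ₀ i ∈ W i := fun i => intrinsicInterior_subset (hξ₀ i)
  have hWC : ∀ i, W i ⊆ C := fun i =>
    (Set.subset_iUnion W i).trans (subset_convexHull ℝ _)
  set z : EuclideanSpace ℝ (Fin d) := ∑ i, lam i • ξ₀ i with hz
  have hzC : z ∈ C :=
    hCconv.sum_mem (fun i _ => (hlam i).le) hlam1 (fun i _ => hWC i (hξ₀W i))
  obtain ⟨t, ht, hη'⟩ := ri_extension hη hzC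
  have h1t : (0:ℝ) < 1 + t := by linarith
  set s : ℝ := (1 + t)⁻¹ with hsdef
  have hs0 : 0 < s := inv_pos.2 h1t
  have hs1 : s < 1 := by
    rw [hsdef, inv_lt_one_iff₀]; right; linarith
  have h1s : 0 < 1 - s := by linarith
  obtain ⟨α, w, hα, hα1, hw, hrep⟩ := hull_rep W hWne hWconv hη'
  have hst : s * t = 1 - s := by
    rw [hsdef]; field_simp; ring
  have hηeq : η = s • (η + t • (η - z)) + (1 - s) • z := by
    have h1 : s * (1 + t) = 1 := inv_mul_cancel₀ h1t.ne'
    rw [smul_add, smul_smul, smul_sub, hst]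
    have : s • η + ((1 - s) • η - (1 - s) • z) + (1 - s) • z = (s + (1 - s)) • η := by
      rw [add_smul]; abel
    rw [this]
    simp
  set δ : Fin n → ℝ := fun i => s * α i + (1 - s) * lam i with hδ
  have hδpos : ∀ i, 0 < δ i := fun i =>
    add_pos_of_nonneg_of_pos (mul_nonneg hs0.le (hα i)) (mul_pos h1s (hlam i))
  set ξ : Fin n → EuclideanSpace ℝ (Fin d) := fun i =>
    ((s * α i) / δ i) • w i + (((1 - s) * lam i) / δ i) • ξ₀ i with hξ
  refine ⟨ξ, δ, ?_, hδpos, ?_, ?_⟩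
  · intro i
    exact combo_mem_ri (hWconv i) (hξ₀ i) (hw i)
      (div_nonneg (mul_nonneg hs0.le (hα i)) (hδpos i).le)
      (div_pos (mul_pos h1s (hlam i)) (hδpos i))
      (by field_simp [(hδpos i).ne']; rfl)
  · simp only [hδ, Finset.sum_add_distrib, ← Finset.mul_sum, hα1, hlam1]
    ring
  · have key : ∀ i, δ i • ξ i = (s * α i) • w i + ((1 - s) * lam i) • ξ₀ i := by
      intro i
      rw [hξ]
      dsimp only
      rw [smul_add, smul_smul, smul_smul, mul_div_cancel₀ _ (hδpos i).ne',
        mul_div_cancel₀ _ (hδpos i).ne']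
    calc η = s • (η + t • (η - z)) + (1 - s) • z := hηeq
      _ = s • ∑ i, α i • w i + (1 - s) • ∑ i, lam i • ξ₀ i := by rw [← hrep, ← hz]
      _ = ∑ i, ((s * α i) • w i + ((1 - s) * lam i) • ξ₀ i) := by
          rw [Finset.smul_sum, Finset.smul_sum, ← Finset.sum_add_distrib]
          simp [smul_smul]
      _ = ∑ i, δ i • ξ i := by simp only [key]

end Aux

/-- if W_1,…,W_n are nonempty compact convex sets and
η ∈ ri(conv(W_1 ∪ ⋯ ∪ W_n)), then η = ∑ δ_i ξ_i with ξ_i ∈ ri W_i, δ_i > 0, ∑ δ_i = 1. -/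
theorem selection_lemma {d n : ℕ} (hn : 0 < n)
    (W : Fin n → Set (E d))
    (hWne : ∀ i, (W i).Nonempty) (hWclosed : ∀ i, IsClosed (W i))
    (hWconv : ∀ i, Convex ℝ (W i)) (hWbdd : ∀ i, Bornology.IsBounded (W i))
    (lam : Fin n → ℝ) (hlam : ∀ i, 0 < lam i) (hlam1 : ∑ i, lam i = 1)
    (η : E d) (hη : η ∈ intrinsicInterior ℝ (convexHull ℝ (⋃ i, W i))) :
    ∃ (ξ : Fin n → E d) (δ : Fin n → ℝ),
      (∀ i, ξ i ∈ intrinsicInterior ℝ (W i)) ∧ (∀ i, 0 < δ i) ∧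
      (∑ i, δ i = 1) ∧ η = ∑ i, δ i • ξ i := by
  exact selection_lemma' hn W hWne hWconv lam hlam hlam1 η hη
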